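/- Let Λ ⊆ ℝ^d be a Delone set (uniformly discrete and relatively dense) whose indicator function 1_Λ : ℝ^d → ℂ is a positive definite function on the group (ℝ^d, +). Then Λ is a lattice, i.e., a discrete cocompact subgroup of ℝ^d. -/

import Mathlib

open scoped BigOperators ComplexOrder

abbrev Euc (d : ℕ) := EuclideanSpace ℝ (Fin d)

/-- A function `f : G → ℂ` on an abelian group is positive definite. -/
def IsPosDefFn {G : Type*} [AddCommGroup G] (f : G → ℂ) : Prop :=
  ∀ (N : ℕ) (x : Fin N → G) (c : Fin N → ℂ),
    0 ≤ ∑ k, ∑ l, c k * (starRingEnd ℂ) (c l) * f (x k - x l)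

section aux
variable {G : Type*} [AddCommGroup G] {Λ : Set G}

omit [AddCommGroup G] in
lemma aux_ind_im (z : G) : (Λ.indicator (fun _ => (1:ℂ)) z).im = 0 := by
  by_cases h : z ∈ Λ <;> simp [h]

lemma aux_neg (hpd : IsPosDefFn (Λ.indicator (fun _ => (1:ℂ)))) {x : G} (hx : x ∈ Λ) :
    -x ∈ Λ := by
  by_contra h
  have H := hpd 2 ![0, x] ![1, Complex.I]
  simp only [Fin.sum_univ_two, Matrix.cons_val_zero, Matrix.cons_val_one, Matrix.head_cons,
    sub_self, zero_sub, sub_zero, map_one, Complex.conj_I, one_mul, mul_one,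
    Set.indicator_of_mem hx, Set.indicator_of_notMem h, mul_zero] at H
  rw [Complex.le_def] at H
  simp [aux_ind_im] at H

lemma aux_zero (hpd : IsPosDefFn (Λ.indicator (fun _ => (1:ℂ)))) {y : G} (hy : y ∈ Λ) :
    (0:G) ∈ Λ := by
  by_contra h0
  have hny : -y ∈ Λ := aux_neg hpd hy
  have H := hpd 2 ![0, y] ![1, -1]
  simp only [Fin.sum_univ_two, Matrix.cons_val_zero, Matrix.cons_val_one, Matrix.head_cons,
    sub_self, zero_sub, sub_zero, map_one, map_neg, Set.indicator_of_mem hy,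
    Set.indicator_of_mem hny, Set.indicator_of_notMem h0, mul_zero, one_mul, mul_one,
    mul_neg, neg_mul, neg_neg, zero_add, add_zero] at H
  rw [Complex.le_def] at H
  simp at H
  linarith [H]

lemma aux_sub (hpd : IsPosDefFn (Λ.indicator (fun _ => (1:ℂ)))) {x y : G}
    (hx : x ∈ Λ) (hy : y ∈ Λ) : x - y ∈ Λ := by
  by_contra h
  have h0 : (0:G) ∈ Λ := aux_zero hpd hx
  have hnx : -x ∈ Λ := aux_neg hpd hx
  have hny : -y ∈ Λ := aux_neg hpd hy
  have h' : ¬ (y - x ∈ Λ) := fun hc => h (by simpa using aux_neg hpd hc)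
  have H := hpd 3 ![0, x, y] ![-1, 1, 1]
  simp only [Fin.sum_univ_three, Matrix.cons_val_zero, Matrix.cons_val_one, Matrix.head_cons,
    Matrix.cons_val_two, Matrix.tail_cons, sub_self, zero_sub, sub_zero, map_one, map_neg,
    Set.indicator_of_mem hx, Set.indicator_of_mem hy, Set.indicator_of_mem hnx,
    Set.indicator_of_mem hny, Set.indicator_of_mem h0, Set.indicator_of_notMem h,
    Set.indicator_of_notMem h', mul_zero, one_mul, mul_one, mul_neg, neg_mul, neg_neg,
    zero_add, add_zero] at H
  rw [Complex.le_def] at H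
  simp at H
  linarith [H]

end aux

theorem stmt11 {d : ℕ} (Λ : Set (Euc d))
    (hud : ∃ r > (0 : ℝ), ∀ x ∈ Λ, ∀ y ∈ Λ, x ≠ y → r ≤ ‖x - y‖)
    (hrd : ∃ R > (0 : ℝ), ∀ x : Euc d, ∃ y ∈ Λ, dist x y ≤ R)
    (hpd : IsPosDefFn (Set.indicator Λ (fun _ => (1 : ℂ)))) :
    ∃ L : AddSubgroup (Euc d), (L : Set (Euc d)) = Λ ∧
      DiscreteTopology L ∧ CompactSpace (Euc d ⧸ L) := by
  obtain ⟨r, hr0, hsep⟩ := hud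
  obtain ⟨R, hR0, hcov⟩ := hrd
  obtain ⟨y0, hy0, -⟩ := hcov 0
  have h0 : (0 : Euc d) ∈ Λ := aux_zero hpd hy0
  let L : AddSubgroup (Euc d) :=
    { carrier := Λ
      zero_mem' := h0
      neg_mem' := fun hx => aux_neg hpd hx
      add_mem' := fun {a b} ha hb => by
        simpa [sub_neg_eq_add] using aux_sub hpd ha (aux_neg hpd hb) }
  refine ⟨L, rfl, ?_, ?_⟩
  · have : DiscreteTopology (Λ : Set (Euc d)) := by
      rw [discreteTopology_subtype_iff]
      intro x hx
      rw [Filter.inf_principal_eq_bot, Metric.mem_nhdsWithin_iff]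
      refine ⟨r, hr0, fun z hz hzΛ => ?_⟩
      have hsz := hsep z hzΛ x hx hz.2
      have hd : dist z x < r := hz.1
      rw [dist_eq_norm] at hd
      linarith
    exact this
  · constructor
    have huniv : (Set.univ : Set (Euc d ⧸ L)) =
        (QuotientAddGroup.mk : Euc d → Euc d ⧸ L) '' Metric.closedBall (0 : Euc d) R := by
      ext q
      simp only [Set.mem_univ, true_iff]
      obtain ⟨x, rfl⟩ := QuotientAddGroup.mk_surjective q
      obtain ⟨y, hyΛ, hdist⟩ := hcov x
      refine ⟨x - y, ?_, ?_⟩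
      · simpa [dist_eq_norm] using hdist
      · rw [QuotientAddGroup.eq]
        simp
        exact hyΛ
    rw [huniv]
    exact (isCompact_closedBall _ _).image QuotientAddGroup.continuous_mk
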